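/- Let Y be a compact metrizable space and A a closed subset of Y. Then the restriction map R : C(Y,ℝ) → C(A,ℝ), R(f) = f|_A, is a surjective linear map that is both continuous and open when C(Y,ℝ) and C(A,ℝ) carry the topologies of pointwise convergence. -/

import Mathlib

open Topology

/-- The topology of pointwise convergence on `C(T, ℝ)`: the topology induced from the
product topology on `ℝ^T` via the canonical injection. -/
def cpTop (T : Type*) [TopologicalSpace T] : TopologicalSpace C(T, ℝ) :=
  TopologicalSpace.induced (fun f => (f : T → ℝ)) Pi.topologicalSpace

/-- A subset `A` of a topological space is zero-dimensional if the subspace `A` has a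
topological base consisting of sets clopen in `A`. -/
def ZeroDimSubset {X : Type*} [TopologicalSpace X] (A : Set X) : Prop :=
  ∀ (a : A) (U : Set A), IsOpen U → a ∈ U → ∃ V : Set A, IsClopen V ∧ a ∈ V ∧ V ⊆ U

/-- Key extension lemma: one can extend `h : C(A, ℝ)` to all of `Y` while prescribing the
values `f y` at finitely many points outside `A`. -/
lemma key_ext {Y : Type*} [TopologicalSpace Y] [NormalSpace Y] [T1Space Y]
    (A : Set Y) (hA : IsClosed A) (h : C(A, ℝ)) (f : C(Y, ℝ)) (I : Finset Y) :
    ∃ g : C(Y, ℝ), g.restrict A = h ∧ ∀ y ∈ I, y ∉ A → g y = f y := by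
  classical
  obtain ⟨G, hG⟩ := ContinuousMap.exists_restrict_eq hA h
  set s' : Finset Y := I.filter (fun y => y ∉ A) with hs'
  have key : ∀ y ∈ s', ∃ φ : C(Y, ℝ),
      Set.EqOn φ 0 (A ∪ (↑(s'.erase y) : Set Y)) ∧ φ y = 1 := by
    intro y hy
    have hy' : y ∉ A := (Finset.mem_filter.1 hy).2
    have hcl : IsClosed (A ∪ (↑(s'.erase y) : Set Y)) :=
      hA.union (Set.Finite.isClosed (s'.erase y).finite_toSet)
    have hd : Disjoint (A ∪ (↑(s'.erase y) : Set Y)) ({y} : Set Y) := by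
      rw [Set.disjoint_singleton_right]
      rintro (h1 | h2)
      · exact hy' h1
      · exact (Finset.notMem_erase y s') (by exact_mod_cast h2)
    obtain ⟨φ, hφ0, hφ1, _⟩ := exists_continuous_zero_one_of_isClosed hcl isClosed_singleton hd
    exact ⟨φ, hφ0, hφ1 rfl⟩
  choose φ hφ0 hφ1 using key
  refine ⟨G + ∑ p ∈ s'.attach, (f p.1 - G p.1) • φ p.1 p.2, ?_, ?_⟩
  · ext a
    have hzero : ∀ p : {x // x ∈ s'}, φ p.1 p.2 (a : Y) = 0 := fun p =>
      hφ0 p.1 p.2 (Set.mem_union_left _ a.2)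
    have := ContinuousMap.congr_fun hG a
    simp only [ContinuousMap.restrict_apply, ContinuousMap.add_apply, ContinuousMap.sum_apply,
      ContinuousMap.smul_apply, hzero, smul_zero, Finset.sum_const_zero, add_zero]
    simpa using this
  · intro y hyI hyA
    have hy : y ∈ s' := Finset.mem_filter.2 ⟨hyI, hyA⟩
    have hsum : ∑ p ∈ s'.attach, ((f p.1 - G p.1) • φ p.1 p.2) y = f y - G y := by
      rw [Finset.sum_eq_single_of_mem (⟨y, hy⟩ : {x // x ∈ s'}) (Finset.mem_attach _ _)]
      · simp [hφ1 y hy]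
      · intro p _ hp
        have hne : y ≠ p.1 := by
          intro hcontra
          exact hp (Subtype.ext hcontra.symm)
        have : φ p.1 p.2 y = 0 :=
          hφ0 p.1 p.2 (Set.mem_union_right _ (by
            exact_mod_cast Finset.mem_erase.2 ⟨hne, hy⟩))
        simp [this]
    simp only [ContinuousMap.add_apply, ContinuousMap.sum_apply, ContinuousMap.smul_apply,
      smul_eq_mul] at hsum ⊢
    rw [hsum]; ring

/-- For a compact metrizable space `Y` and a closed subset `A ⊆ Y`, the restriction map
`R : C(Y, ℝ) → C(A, ℝ)`, `R f = f|_A`, is a surjective linear map which is continuous and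
open with respect to the topologies of pointwise convergence. -/
theorem statement13 {Y : Type*} [TopologicalSpace Y] [CompactSpace Y]
    [TopologicalSpace.MetrizableSpace Y] (A : Set Y) (hA : IsClosed A) :
    Function.Surjective (fun f : C(Y, ℝ) => f.restrict A) ∧
    (∀ f g : C(Y, ℝ), (f + g).restrict A = f.restrict A + g.restrict A) ∧
    (∀ (c : ℝ) (f : C(Y, ℝ)), (c • f).restrict A = c • f.restrict A) ∧
    @Continuous _ _ (cpTop Y) (cpTop A) (fun f : C(Y, ℝ) => f.restrict A) ∧
    @IsOpenMap _ _ (cpTop Y) (cpTop A) (fun f : C(Y, ℝ) => f.restrict A) := by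
  classical
  letI := TopologicalSpace.metrizableSpaceMetric Y
  refine ⟨?_, ?_, ?_, ?_, ?_⟩
  · intro h
    obtain ⟨g, hg⟩ := ContinuousMap.exists_restrict_eq hA h
    exact ⟨g, hg⟩
  · intro f g; rfl
  · intro c f; rfl
  · letI : TopologicalSpace C(Y, ℝ) := cpTop Y
    letI : TopologicalSpace C(A, ℝ) := cpTop A
    rw [show (cpTop A) = TopologicalSpace.induced (fun f : C(A,ℝ) => (f : A → ℝ))
      Pi.topologicalSpace from rfl] at *
    apply continuous_induced_rng.2
    apply continuous_pi
    intro a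
    exact (continuous_apply (a : Y)).comp continuous_induced_dom
  · letI : TopologicalSpace C(Y, ℝ) := cpTop Y
    letI : TopologicalSpace C(A, ℝ) := cpTop A
    intro U hU
    obtain ⟨W, hW, rfl⟩ := isOpen_induced_iff.1 hU
    rw [isOpen_iff_forall_mem_open]
    rintro h0 ⟨f, hfU, rfl⟩
    obtain ⟨I, u, hu, hpi⟩ := isOpen_pi_iff.1 hW _ hfU
    set J : Set A := Subtype.val ⁻¹' (I : Set Y) with hJ
    have hJfin : J.Finite := Set.Finite.preimage Subtype.val_injective.injOn I.finite_toSet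
    refine ⟨(fun k : C(A, ℝ) => (k : A → ℝ)) ⁻¹' J.pi (fun a => u (a : Y)), ?_, ?_, ?_⟩
    · rintro k hk
      obtain ⟨g, hg1, hg2⟩ := key_ext A hA k f I
      refine ⟨g, ?_, hg1⟩
      apply hpi
      intro y hyI
      by_cases hyA : y ∈ A
      · have : g y = k ⟨y, hyA⟩ := by
          have := ContinuousMap.congr_fun hg1 ⟨y, hyA⟩
          simpa using this
        show g y ∈ u y
        rw [this]
        exact hk ⟨y, hyA⟩ hyI
      · show g y ∈ u y
        rw [hg2 y hyI hyA]
        exact (hu y hyI).2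
    · exact IsOpen.preimage continuous_induced_dom
        (isOpen_set_pi hJfin (fun a ha => (hu (a : Y) ha).1))
    · intro a ha
      exact (hu (a : Y) ha).2
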